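/- Let X, Y be real normed linear spaces, x ∈ X nonzero, T : X → Y a bounded linear operator with Tx ≠ 0, and f ∈ J(x). Then T preserves Birkhoff-James orthogonality at x with respect to ker f (i.e., Tx ⊥_B Tz for all z ∈ ker f) if and only if there exists g ∈ J(Tx) such that T(ker f) ⊆ ker g. -/

import Mathlib

/-- Birkhoff-James orthogonality. -/
def BJOrth {X : Type*} [NormedAddCommGroup X] [NormedSpace ℝ X] (x y : X) : Prop :=
  ∀ t : ℝ, ‖x‖ ≤ ‖x + t • y‖

/-- The set of support functionals at `x`. -/
def suppFun {X : Type*} [NormedAddCommGroup X] [NormedSpace ℝ X] (x : X) :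
    Set (X →L[ℝ] ℝ) := {f | ‖f‖ = 1 ∧ f x = ‖x‖}

set_option maxHeartbeats 1000000

theorem stmt_10 {X Y : Type*} [NormedAddCommGroup X] [NormedSpace ℝ X]
    [NormedAddCommGroup Y] [NormedSpace ℝ Y]
    (x : X) (hx : x ≠ 0) (T : X →L[ℝ] Y) (hTx : T x ≠ 0)
    (f : X →L[ℝ] ℝ) (hf : f ∈ suppFun x) :
    (∀ z : X, f z = 0 → BJOrth (T x) (T z)) ↔
      ∃ g ∈ suppFun (T x), ∀ z : X, f z = 0 → g (T z) = 0 := by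
  obtain ⟨hf1, hfx⟩ := hf
  have hxpos : (0:ℝ) < ‖x‖ := norm_pos_iff.mpr hx
  have hTxpos : (0:ℝ) < ‖T x‖ := norm_pos_iff.mpr hTx
  constructor
  · intro hBJ
    -- key estimate: |f w| * ‖T x‖ ≤ ‖x‖ * ‖T w‖
    have key : ∀ w : X, |f w| * ‖T x‖ ≤ ‖x‖ * ‖T w‖ := by
      intro w
      set α : ℝ := f w / ‖x‖ with hα
      have hz : f (w - α • x) = 0 := by
        simp [map_sub, map_smul, hα, hfx]
        field_simp
        ring
      by_cases h0 : α = 0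
      · have : f w = 0 := by
          have := hz; simp [h0] at this; exact this
        simp [this]
        positivity
      · have hib : ‖T x‖ ≤ ‖T x + α⁻¹ • T (w - α • x)‖ := hBJ _ hz α⁻¹
        have hTw : T w = α • (T x + α⁻¹ • T (w - α • x)) := by
          rw [smul_add, smul_smul, mul_inv_cancel₀ h0, one_smul, map_sub, map_smul]
          abel
        have : ‖T w‖ = |α| * ‖T x + α⁻¹ • T (w - α • x)‖ := by
          rw [hTw, norm_smul, Real.norm_eq_abs]
        have h1 : |α| * ‖T x‖ ≤ ‖T w‖ := by
          rw [this]
          exact mul_le_mul_of_nonneg_left hib (abs_nonneg α)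
        have hfw : |f w| = |α| * ‖x‖ := by
          rw [hα, abs_div, abs_of_pos hxpos]
          field_simp
        calc |f w| * ‖T x‖ = ‖x‖ * (|α| * ‖T x‖) := by rw [hfw]; ring
          _ ≤ ‖x‖ * ‖T w‖ := by
              exact mul_le_mul_of_nonneg_left h1 (le_of_lt hxpos)
    -- the linear functional h = (‖Tx‖/‖x‖) • f
    set c : ℝ := ‖T x‖ / ‖x‖ with hc
    have hcpos : 0 < c := div_pos hTxpos hxpos
    set h : X →ₗ[ℝ] ℝ := c • (f : X →ₗ[ℝ] ℝ) with hh
    have hker : LinearMap.ker (T : X →ₗ[ℝ] Y) ≤ LinearMap.ker h := by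
      intro w hw
      have hw' : T w = 0 := hw
      have := key w
      rw [hw', norm_zero, mul_zero] at this
      have hfw : f w = 0 := by
        have h2 : |f w| ≤ 0 := by nlinarith [abs_nonneg (f w)]
        exact abs_nonpos_iff.mp h2
      simp [hh, hfw]
    -- factor through range T
    set e := LinearMap.quotKerEquivRange (T : X →ₗ[ℝ] Y)
    set φ₀ : LinearMap.range (T : X →ₗ[ℝ] Y) →ₗ[ℝ] ℝ :=
      (LinearMap.ker T.toLinearMap).liftQ h hker ∘ₗ e.symm.toLinearMap with hφ₀
    have hφ₀T : ∀ w : X, ∀ hw : T w ∈ LinearMap.range (T : X →ₗ[ℝ] Y),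
        φ₀ ⟨T w, hw⟩ = c * f w := by
      intro w hw
      have : (⟨T w, hw⟩ : LinearMap.range (T : X →ₗ[ℝ] Y)) =
          e (Submodule.Quotient.mk w) := by
        apply Subtype.ext
        simp [e, LinearMap.quotKerEquivRange_apply_mk]
      rw [hφ₀, this]
      simp [h]
    have hbound : ∀ y : LinearMap.range (T : X →ₗ[ℝ] Y), ‖φ₀ y‖ ≤ 1 * ‖y‖ := by
      rintro ⟨y, hy⟩
      obtain ⟨w, rfl⟩ := hy
      simp only [ContinuousLinearMap.coe_coe]
      rw [hφ₀T w (LinearMap.mem_range_self _ w)]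
      have hnorm : ‖(⟨T w, LinearMap.mem_range_self _ w⟩ :
          LinearMap.range (T : X →ₗ[ℝ] Y))‖ = ‖T w‖ := rfl
      rw [hnorm, Real.norm_eq_abs, abs_mul, abs_of_pos hcpos, one_mul, hc,
        div_mul_eq_mul_div, div_le_iff₀ hxpos]
      nlinarith [key w]
    set φ : LinearMap.range (T : X →ₗ[ℝ] Y) →L[ℝ] ℝ :=
      LinearMap.mkContinuous φ₀ 1 hbound with hφ
    obtain ⟨g, hg1, hg2⟩ := exists_extension_norm_eq (LinearMap.range (T : X →ₗ[ℝ] Y)) φ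
    have hgT : ∀ w : X, g (T w) = c * f w := by
      intro w
      have := hg1 ⟨T w, LinearMap.mem_range_self _ w⟩
      rw [this]
      show φ₀ _ = _
      exact hφ₀T w _
    have hgTx : g (T x) = ‖T x‖ := by
      rw [hgT x, hfx, hc]
      field_simp
    have hgnorm : ‖g‖ = 1 := by
      apply le_antisymm
      · rw [hg2]
        exact LinearMap.mkContinuous_norm_le _ zero_le_one _
      · have : ‖T x‖ ≤ ‖g‖ * ‖T x‖ := by
          calc ‖T x‖ = g (T x) := hgTx.symm
            _ ≤ |g (T x)| := le_abs_self _
            _ ≤ ‖g‖ * ‖T x‖ := g.le_opNorm (T x)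
        nlinarith
    exact ⟨g, ⟨hgnorm, hgTx⟩, fun z hz => by rw [hgT z, hz, mul_zero]⟩
  · rintro ⟨g, ⟨hg1, hg2⟩, hgk⟩ z hz t
    calc ‖T x‖ = g (T x + t • T z) := by
          rw [map_add, map_smul, hgk z hz, smul_zero, add_zero, hg2]
      _ ≤ |g (T x + t • T z)| := le_abs_self _
      _ ≤ ‖g‖ * ‖T x + t • T z‖ := g.le_opNorm _
      _ = ‖T x + t • T z‖ := by rw [hg1, one_mul]
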